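/- Redundancy comparison of improved one-point and two-point Hermitian codes (Corollary 4). Fix an integer q ≥ 2. For i ∈ ℤ write i = (d+q−2)(q+1) − a with the unique integers d ∈ ℤ and 0 ≤ a ≤ q, and define the one-point coset bound B(i) = (q+1)d − a if a − d < 0, B(i) = a(q − a + d) if 0 ≤ a − d ≤ q−1, and B(i) = 0 otherwise; define the two-point coset bound B'(i) = (q+1)d − a + 1 if d > q−1, B'(i) = qd + q − a if a ≤ d ≤ q−1, B'(i) = a(q − a + d) if 0 ≤ a − d − 1 ≤ q−1, and B'(i) = 0 otherwise. For an integer δ define the redundancies r(δ) = |{i ∈ ℤ : i ≥ −1 and 0 < B(i) < δ}| and r'(δ) = |{i ∈ ℤ : i ≥ −1 and 0 < B'(i) < δ}|. Then for every δ = dq + b with integers 0 < d ≤ q−1 and 0 < b ≤ q, one has r(δ) − r'(δ) = b−1 if b ≤ d ≤ q−b; = q−d−1 if b ≤ d and q−b < d; = q−b if q−b < d < b; and = d if d < b and d ≤ q−b. -/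

import Mathlib

private lemma herm_exists_rep (q i : ℤ) (hq : 2 ≤ q) :
    ∃ d a : ℤ, i = (d + q - 2) * (q + 1) - a ∧ 0 ≤ a ∧ a ≤ q := by
  refine ⟨-((-i) / (q + 1)) - q + 2, (-i) % (q + 1), ?_, ?_, ?_⟩
  · linear_combination Int.mul_ediv_add_emod (-i) (q + 1)
  · exact Int.emod_nonneg _ (by omega)
  · have := Int.emod_lt_of_pos (-i) (show (0:ℤ) < q + 1 by omega); omega

set_option maxHeartbeats 1000000 in
/-- Redundancy comparison of improved one-point and two-point Hermitian codes.
`B` is the one-point coset bound and `B'` the improved two-point coset bound,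
specified on `i = (d+q-2)(q+1) - a` with `0 ≤ a ≤ q`; `r δ` and `r' δ` count the
indices `i ≥ -1` whose coset bound is strictly between `0` and `δ`. For
`δ = dq + b` with `0 < d ≤ q-1` and `0 < b ≤ q`, the difference `r δ - r' δ`
is given by the four-case formula. -/
theorem hermitian_redundancy_difference (q : ℤ) (hq : 2 ≤ q)
    (B B' : ℤ → ℤ)
    (hB : ∀ i d a : ℤ, i = (d + q - 2) * (q + 1) - a → 0 ≤ a → a ≤ q →
      B i = if a - d < 0 then (q + 1) * d - a
            else if 0 ≤ a - d ∧ a - d ≤ q - 1 then a * (q - a + d)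
            else 0)
    (hB' : ∀ i d a : ℤ, i = (d + q - 2) * (q + 1) - a → 0 ≤ a → a ≤ q →
      B' i = if q - 1 < d then (q + 1) * d - a + 1
             else if a ≤ d ∧ d ≤ q - 1 then q * d + q - a
             else if 0 ≤ a - d - 1 ∧ a - d - 1 ≤ q - 1 then a * (q - a + d)
             else 0)
    (r r' : ℤ → ℕ)
    (hr : ∀ δ : ℤ, r δ = Nat.card {i : ℤ // -1 ≤ i ∧ 0 < B i ∧ B i < δ})
    (hr' : ∀ δ : ℤ, r' δ = Nat.card {i : ℤ // -1 ≤ i ∧ 0 < B' i ∧ B' i < δ})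
    (δ d b : ℤ) (hd0 : 0 < d) (hdq : d ≤ q - 1) (hb0 : 0 < b) (hbq : b ≤ q)
    (hδ : δ = d * q + b) :
    (b ≤ d ∧ d ≤ q - b → (r δ : ℤ) - (r' δ : ℤ) = b - 1) ∧
    (b ≤ d ∧ q - b < d → (r δ : ℤ) - (r' δ : ℤ) = q - d - 1) ∧
    (q - b < d ∧ d < b → (r δ : ℤ) - (r' δ : ℤ) = q - b) ∧
    (d < b ∧ d ≤ q - b → (r δ : ℤ) - (r' δ : ℤ) = d) := by
  subst hδ
  have hq0 : (0:ℤ) < q := by linarith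
  have hδub : d * q + b ≤ q * q := by
    linarith [mul_le_mul_of_nonneg_right (show d ≤ q - 1 from hdq) hq0.le]
  have hδlb : q + 1 ≤ d * q + b := by
    linarith [mul_le_mul_of_nonneg_right (show (1:ℤ) ≤ d by omega) hq0.le]
  set S : Set ℤ := {i | -1 ≤ i ∧ 0 < B i ∧ B i < d * q + b} with hSdef
  set S' : Set ℤ := {i | -1 ≤ i ∧ 0 < B' i ∧ B' i < d * q + b} with hS'def
  set M : ℤ := (d + q - 2) * (q + 1) with hM
  -- the one-point-only contributions form an interval
  have hdiffA : S \ S' =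
      ↑(Finset.Icc (M - min d (q - b)) (M - max 0 (d - b + 1))) := by
    ext i
    simp only [hSdef, hS'def, Set.mem_diff, Set.mem_setOf_eq, Finset.coe_Icc, Set.mem_Icc]
    constructor
    · rintro ⟨⟨hin, hB0, hBδ⟩, hnot⟩
      have hnot' : ¬ (0 < B' i ∧ B' i < d * q + b) := fun h => hnot ⟨hin, h.1, h.2⟩
      obtain ⟨d0, a0, hieq, ha0, ha1⟩ := herm_exists_rep q i hq
      have hBi := hB i d0 a0 hieq ha0 ha1
      have hB'i := hB' i d0 a0 hieq ha0 ha1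
      rcases lt_or_ge (a0 - d0) 0 with hc | hc
      · -- a0 < d0 : B i = (q+1)d0 - a0
        rw [if_pos hc] at hBi
        rw [hBi] at hB0 hBδ
        have hd01 : 1 ≤ d0 := by omega
        have hd0q : d0 ≤ q - 1 := by
          by_contra h'
          push_neg at h'
          linarith [mul_le_mul_of_nonneg_right (show q ≤ d0 by omega)
            (show (0:ℤ) ≤ q + 1 by omega)]
        rw [if_neg (by omega), if_pos ⟨by omega, hd0q⟩] at hB'i
        have hB'pos : 0 < B' i := by
          rw [hB'i]
          linarith [mul_le_mul_of_nonneg_right (show (1:ℤ) ≤ d0 by omega) hq0.le]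
        have hge : d * q + b ≤ B' i := by
          by_contra hlt; push_neg at hlt; exact hnot' ⟨hB'pos, hlt⟩
        rw [hB'i] at hge
        have hdd : d0 = d := by
          by_contra hne
          rcases lt_or_gt_of_ne hne with h | h
          · linarith [mul_le_mul_of_nonneg_right (show d0 + 1 ≤ d by omega) hq0.le]
          · linarith [mul_le_mul_of_nonneg_right (show d + 1 ≤ d0 by omega) hq0.le]
        subst hdd
        have hiM : i = M - a0 := by rw [hM]; exact hieq
        have hub : a0 ≤ q - b := by linarith
        have hlb : d0 - b + 1 ≤ a0 := by linarith
        omega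
      · rcases le_or_gt (a0 - d0) (q - 1) with hc2 | hc2
        · rw [if_neg (by omega), if_pos ⟨hc, hc2⟩] at hBi
          rcases eq_or_lt_of_le (show d0 ≤ a0 by omega) with heq | hlt
          · -- a0 = d0 : B i = d0 * q
            have hd0q : d0 ≤ q - 1 := by
              by_contra h'
              push_neg at h'
              have ha : a0 = q := by omega
              have hd : d0 = q := by omega
              rw [hBi, ha, hd] at hBδ
              linarith
            have hBval : B i = d0 * q := by rw [hBi, ← heq]; ring
            rw [if_neg (by omega), if_pos ⟨by omega, hd0q⟩] at hB'i
            have hB'pos : 0 < B' i := by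
              rw [hB'i]
              linarith [mul_le_mul_of_nonneg_right (show (0:ℤ) ≤ d0 by omega) hq0.le]
            have hge : d * q + b ≤ B' i := by
              by_contra hlt2; push_neg at hlt2; exact hnot' ⟨hB'pos, hlt2⟩
            rw [hB'i] at hge
            rw [hBval] at hB0 hBδ
            have hd0pos : 1 ≤ d0 := by
              by_contra h'
              push_neg at h'
              linarith [mul_le_mul_of_nonneg_right (show d0 ≤ 0 by omega) hq0.le]
            have hdd : d0 = d := by
              by_contra hne
              rcases lt_or_gt_of_ne hne with h | h
              · linarith [mul_le_mul_of_nonneg_right (show d0 + 1 ≤ d by omega) hq0.le]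
              · linarith [mul_le_mul_of_nonneg_right (show d + 1 ≤ d0 by omega) hq0.le]
            subst hdd
            have hiM : i = M - a0 := by rw [hM]; exact hieq
            have hub : d0 ≤ q - b := by linarith
            omega
          · -- d0 < a0 : B' i = B i, contradiction
            exfalso
            rw [if_neg (by omega), if_neg (by omega), if_pos ⟨by omega, by omega⟩] at hB'i
            have hEq : B' i = B i := by rw [hB'i, hBi]
            exact hnot' ⟨by rw [hEq]; exact hB0, by rw [hEq]; exact hBδ⟩
        · -- a0 - d0 ≥ q : B i = 0, contradiction
          exfalso
          rw [if_neg (by omega), if_neg (by omega)] at hBi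
          rw [hBi] at hB0
          exact absurd hB0 (by norm_num)
    · intro him
      have ha0l : max 0 (d - b + 1) ≤ M - i := by omega
      have ha0u : M - i ≤ min d (q - b) := by omega
      have hieq : i = (d + q - 2) * (q + 1) - (M - i) := by rw [← hM]; ring
      have ha0 : 0 ≤ M - i := by omega
      have ha1 : M - i ≤ q := by omega
      have hBi := hB i d (M - i) hieq ha0 ha1
      have hB'i := hB' i d (M - i) hieq ha0 ha1
      have hBval : B i = (q + 1) * d - (M - i) := by
        rcases lt_or_eq_of_le (show M - i ≤ d by omega) with h | h
        · rw [hBi, if_pos (by omega)]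
        · rw [hBi, if_neg (by omega), if_pos ⟨by omega, by omega⟩, h]; ring
      rw [if_neg (by omega), if_pos ⟨by omega, by omega⟩] at hB'i
      have hin : -1 ≤ i := by
        linarith [mul_le_mul_of_nonneg_right (show q - 1 ≤ d + q - 2 by omega)
          (show (0:ℤ) ≤ q + 1 by omega),
          mul_le_mul_of_nonneg_right (show (1:ℤ) ≤ q by omega) hq0.le]
      refine ⟨⟨hin, ?_, ?_⟩, ?_⟩
      · rw [hBval]
        have had : M - i ≤ d := by omega
        linarith [mul_le_mul_of_nonneg_right (show (1:ℤ) ≤ d by omega) hq0.le]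
      · rw [hBval]
        have h1 : d - b + 1 ≤ M - i := by omega
        linarith
      · rintro ⟨-, -, hlt⟩
        rw [hB'i] at hlt
        have h2 : M - i ≤ q - b := by omega
        linarith
  -- the two-point-only contribution is a single point
  have hdiffB : S' \ S = {(q - 2) * (q + 1)} := by
    ext i
    simp only [hSdef, hS'def, Set.mem_diff, Set.mem_setOf_eq, Set.mem_singleton_iff]
    constructor
    · rintro ⟨⟨hin, hB'0, hB'δ⟩, hnot⟩
      have hnot' : ¬ (0 < B i ∧ B i < d * q + b) := fun h => hnot ⟨hin, h.1, h.2⟩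
      obtain ⟨d0, a0, hieq, ha0, ha1⟩ := herm_exists_rep q i hq
      have hBi := hB i d0 a0 hieq ha0 ha1
      have hB'i := hB' i d0 a0 hieq ha0 ha1
      rcases lt_or_ge (a0 - d0) 0 with hc | hc
      · exfalso
        rw [if_pos hc] at hBi
        have hd01 : 1 ≤ d0 := by omega
        rcases le_or_gt q d0 with h' | h'
        · rw [if_pos (by omega)] at hB'i
          rw [hB'i] at hB'δ
          linarith [mul_le_mul_of_nonneg_right (show q ≤ d0 by omega)
            (show (0:ℤ) ≤ q + 1 by omega)]
        · rw [if_neg (by omega), if_pos ⟨by omega, by omega⟩] at hB'i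
          have hBpos : 0 < B i := by
            rw [hBi]
            linarith [mul_le_mul_of_nonneg_right (show (1:ℤ) ≤ d0 by omega) hq0.le]
          have hge : d * q + b ≤ B i := by
            by_contra hlt; push_neg at hlt; exact hnot' ⟨hBpos, hlt⟩
          rw [hBi] at hge
          rw [hB'i] at hB'δ
          linarith
      · rcases le_or_gt (a0 - d0) (q - 1) with hc2 | hc2
        · rw [if_neg (by omega), if_pos ⟨hc, hc2⟩] at hBi
          rcases eq_or_lt_of_le (show d0 ≤ a0 by omega) with heq | hlt
          · rcases le_or_gt q d0 with h' | h'
            · exfalso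
              rw [if_pos (by omega)] at hB'i
              rw [hB'i] at hB'δ
              have hd : d0 = q := by omega
              have ha : a0 = q := by omega
              rw [hd, ha] at hB'δ
              linarith
            · rw [if_neg (by omega), if_pos ⟨by omega, by omega⟩] at hB'i
              have hBval : B i = d0 * q := by rw [hBi, ← heq]; ring
              rcases le_or_gt (B i) 0 with hBle | hBgt
              · rw [hBval] at hBle
                have hd00 : d0 = 0 := by
                  by_contra h''
                  have h1 : 1 ≤ d0 := by omega
                  linarith [mul_le_mul_of_nonneg_right (show (1:ℤ) ≤ d0 by omega) hq0.le]
                have ha00 : a0 = 0 := by omega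
                rw [hieq, hd00, ha00]; ring
              · exfalso
                have hge : d * q + b ≤ B i := by
                  by_contra hlt2; push_neg at hlt2; exact hnot' ⟨hBgt, hlt2⟩
                rw [hBval] at hge
                rw [hB'i] at hB'δ
                have : a0 = d0 := heq.symm
                linarith
          · exfalso
            rw [if_neg (by omega), if_neg (by omega), if_pos ⟨by omega, by omega⟩] at hB'i
            have hEq : B' i = B i := by rw [hB'i, hBi]
            exact hnot' ⟨by rw [← hEq]; exact hB'0, by rw [← hEq]; exact hB'δ⟩
        · exfalso
          rcases le_or_gt (a0 - d0 - 1) (q - 1) with h3 | h3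
          · rw [if_neg (by omega), if_neg (by omega), if_pos ⟨by omega, h3⟩] at hB'i
            have hz : q - a0 + d0 = 0 := by omega
            rw [hB'i, hz, mul_zero] at hB'0
            exact absurd hB'0 (by norm_num)
          · rw [if_neg (by omega), if_neg (by omega), if_neg (by omega)] at hB'i
            rw [hB'i] at hB'0
            exact absurd hB'0 (by norm_num)
    · intro h
      subst h
      have hBi := hB ((q - 2) * (q + 1)) 0 0 (by ring) le_rfl (by omega)
      have hB'i := hB' ((q - 2) * (q + 1)) 0 0 (by ring) le_rfl (by omega)
      rw [if_neg (by omega), if_pos ⟨le_rfl, by omega⟩] at hBi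
      rw [if_neg (by omega), if_pos ⟨le_rfl, by omega⟩] at hB'i
      have hin : -1 ≤ (q - 2) * (q + 1) := by
        linarith [mul_nonneg (show (0:ℤ) ≤ q - 2 by omega) (show (0:ℤ) ≤ q + 1 by omega)]
      refine ⟨⟨hin, ?_, ?_⟩, ?_⟩
      · rw [hB'i]; linarith
      · rw [hB'i]; linarith
      · rintro ⟨-, hB0, -⟩
        rw [hBi] at hB0
        simp at hB0
  -- finiteness
  have hfinS : S.Finite := by
    apply Set.Finite.subset (Set.finite_Icc (-1 : ℤ) (2 * q * q))
    rintro i ⟨h1, h2, h3⟩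
    refine Set.mem_Icc.mpr ⟨h1, ?_⟩
    by_contra hbig
    push_neg at hbig
    obtain ⟨d0, a0, hieq, ha0, ha1⟩ := herm_exists_rep q i hq
    have hd0 : q + 1 ≤ d0 := by
      by_contra h'
      push_neg at h'
      linarith [mul_le_mul_of_nonneg_right (show d0 + q - 2 ≤ 2 * q - 2 by omega)
        (show (0:ℤ) ≤ q + 1 by omega)]
    have hBi := hB i d0 a0 hieq ha0 ha1
    rw [if_pos (by omega)] at hBi
    rw [hBi] at h3
    linarith [mul_le_mul_of_nonneg_right (show q + 1 ≤ d0 from hd0)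
      (show (0:ℤ) ≤ q + 1 by omega)]
  have hfinS' : S'.Finite := by
    apply Set.Finite.subset (Set.finite_Icc (-1 : ℤ) (2 * q * q))
    rintro i ⟨h1, h2, h3⟩
    refine Set.mem_Icc.mpr ⟨h1, ?_⟩
    by_contra hbig
    push_neg at hbig
    obtain ⟨d0, a0, hieq, ha0, ha1⟩ := herm_exists_rep q i hq
    have hd0 : q + 1 ≤ d0 := by
      by_contra h'
      push_neg at h'
      linarith [mul_le_mul_of_nonneg_right (show d0 + q - 2 ≤ 2 * q - 2 by omega)
        (show (0:ℤ) ≤ q + 1 by omega)]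
    have hB'i := hB' i d0 a0 hieq ha0 ha1
    rw [if_pos (by omega)] at hB'i
    rw [hB'i] at h3
    linarith [mul_le_mul_of_nonneg_right (show q + 1 ≤ d0 from hd0)
      (show (0:ℤ) ≤ q + 1 by omega)]
  -- cardinality bookkeeping
  have hrS : r (d * q + b) = S.ncard := by
    rw [hr (d * q + b)]
    exact Nat.card_coe_set_eq S
  have hrS' : r' (d * q + b) = S'.ncard := by
    rw [hr' (d * q + b)]
    exact Nat.card_coe_set_eq S'
  have key1 := Set.ncard_inter_add_ncard_diff_eq_ncard S S' hfinS
  have key2 := Set.ncard_inter_add_ncard_diff_eq_ncard S' S hfinS'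
  rw [Set.inter_comm] at key2
  have hcard1 : (S \ S').ncard =
      (M - max 0 (d - b + 1) + 1 - (M - min d (q - b))).toNat := by
    rw [hdiffA, Set.ncard_coe_finset, Int.card_Icc]
  have hcard2 : (S' \ S).ncard = 1 := by
    rw [hdiffB]; exact Set.ncard_singleton _
  have hfinal : (r (d * q + b) : ℤ) - (r' (d * q + b) : ℤ) =
      ((M - max 0 (d - b + 1) + 1 - (M - min d (q - b))).toNat : ℤ) - 1 := by
    rw [hrS, hrS']
    omega
  refine ⟨fun h => ?_, fun h => ?_, fun h => ?_, fun h => ?_⟩ <;>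
    · rw [hfinal]; omega
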